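/- Let τ > 0, C ∈ ℂ, N ≥ 2, γ_n = (n/τ + C)^N. There exists K > 0 such that for all n with |n| sufficiently large and all m with γ_m ≠ γ_n, one has |γ_n − γ_m| ≥ K|n|^{N−1}. -/

import Mathlib

open Finset Complex

lemma lem_lip (k : ℕ) (a b : ℂ) :
    ‖a ^ k - b ^ k‖ ≤ k * max ‖a‖ ‖b‖ ^ (k - 1) * ‖a - b‖ := by
  have hM : 0 ≤ max ‖a‖ ‖b‖ := le_max_of_le_left (norm_nonneg a)
  rw [← geom_sum₂_mul a b k, norm_mul]
  gcongr
  calc ‖∑ i ∈ range k, a ^ i * b ^ (k - 1 - i)‖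
      ≤ ∑ i ∈ range k, ‖a ^ i * b ^ (k - 1 - i)‖ := norm_sum_le _ _
    _ ≤ ∑ _i ∈ range k, max ‖a‖ ‖b‖ ^ (k - 1) := by
        refine Finset.sum_le_sum fun i hi => ?_
        rw [norm_mul, norm_pow, norm_pow]
        have hik : i ≤ k - 1 := by
          have := Finset.mem_range.mp hi; omega
        calc ‖a‖ ^ i * ‖b‖ ^ (k - 1 - i)
            ≤ max ‖a‖ ‖b‖ ^ i * max ‖a‖ ‖b‖ ^ (k - 1 - i) := by
              gcongr <;> [exact le_max_left _ _; exact le_max_right _ _]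
          _ = max ‖a‖ ‖b‖ ^ (k - 1) := by rw [← pow_add]; congr 1; omega
    _ = k * max ‖a‖ ‖b‖ ^ (k - 1) := by
        rw [Finset.sum_const, Finset.card_range, nsmul_eq_mul]

lemma lem_sum (N : ℕ) (a b : ℂ) :
    ‖(∑ i ∈ range N, b ^ i * a ^ (N - 1 - i)) - N * a ^ (N - 1)‖
      ≤ N ^ 2 * max ‖a‖ ‖b‖ ^ (N - 2) * ‖a - b‖ := by
  have hM : 0 ≤ max ‖a‖ ‖b‖ := le_max_of_le_left (norm_nonneg a)
  have key : (N : ℂ) * a ^ (N - 1) = ∑ _i ∈ range N, a ^ (N - 1) := by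
    rw [Finset.sum_const, Finset.card_range, nsmul_eq_mul]
  rw [key, ← Finset.sum_sub_distrib]
  calc ‖∑ i ∈ range N, (b ^ i * a ^ (N - 1 - i) - a ^ (N - 1))‖
      ≤ ∑ i ∈ range N, ‖b ^ i * a ^ (N - 1 - i) - a ^ (N - 1)‖ := norm_sum_le _ _
    _ ≤ ∑ _i ∈ range N, (N * max ‖a‖ ‖b‖ ^ (N - 2) * ‖a - b‖) := by
        refine Finset.sum_le_sum fun i hi => ?_
        have hik : i ≤ N - 1 := by have := Finset.mem_range.mp hi; omega
        have ha : a ^ (N - 1) = a ^ i * a ^ (N - 1 - i) := by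
          rw [← pow_add]; congr 1; omega
        rw [ha, ← sub_mul, norm_mul]
        rcases Nat.eq_zero_or_pos i with h0 | h0
        · subst h0; simp
          positivity
        calc ‖b ^ i - a ^ i‖ * ‖a ^ (N - 1 - i)‖
            ≤ (i * max ‖b‖ ‖a‖ ^ (i - 1) * ‖b - a‖) * ‖a‖ ^ (N - 1 - i) := by
              rw [norm_pow]; gcongr; exact lem_lip i b a
          _ ≤ (N * max ‖a‖ ‖b‖ ^ (i - 1) * ‖a - b‖) * max ‖a‖ ‖b‖ ^ (N - 1 - i) := by
              rw [max_comm ‖b‖, norm_sub_rev b a]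
              have hiN : (i : ℝ) ≤ (N : ℝ) := by exact_mod_cast (by omega : i ≤ N)
              gcongr
              exact le_max_left _ _
          _ = N * max ‖a‖ ‖b‖ ^ (N - 2) * ‖a - b‖ := by
              rw [show N - 2 = (i - 1) + (N - 1 - i) by omega, pow_add]
              ring
    _ = N ^ 2 * max ‖a‖ ‖b‖ ^ (N - 2) * ‖a - b‖ := by
        rw [Finset.sum_const, Finset.card_range, nsmul_eq_mul]; ring

lemma lem_case1 (N : ℕ) (hN : 2 ≤ N) (a b : ℂ)
    (h : ‖a - b‖ * (N * 2 ^ N) ≤ ‖a‖) :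
    ‖a‖ ^ (N - 1) * ‖a - b‖ ≤ ‖a ^ N - b ^ N‖ := by
  obtain ⟨M, rfl⟩ : ∃ M, N = M + 2 := ⟨N - 2, by omega⟩
  set N := M + 2 with hNdef
  have hNR : (2:ℝ) ≤ N := by exact_mod_cast hN
  have h2N : (1:ℝ) ≤ 2 ^ N := by
    simpa using pow_le_pow_left₀ (by norm_num) (by norm_num : (1:ℝ) ≤ 2) N
  have hA : (0:ℝ) ≤ ‖a‖ := norm_nonneg a
  have hNpos : (0:ℝ) < N * 2 ^ N := by positivity
  have hab : ‖a - b‖ ≤ ‖a‖ / (N * 2 ^ N) := (le_div_iff₀ hNpos).mpr h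
  set S := ∑ i ∈ range N, b ^ i * a ^ (N - 1 - i) with hS
  have hfac : a ^ N - b ^ N = S * (a - b) := by
    have h' := geom_sum₂_mul b a N
    rw [hS]; linear_combination h'
  rw [hfac, norm_mul]
  gcongr
  -- now show ‖a‖ ^ (N-1) ≤ ‖S‖
  have habA : ‖a - b‖ ≤ ‖a‖ := by
    calc ‖a - b‖ ≤ ‖a‖ / (N * 2 ^ N) := hab
      _ ≤ ‖a‖ / 1 := by gcongr; nlinarith
      _ = ‖a‖ := div_one _
  have hble : ‖b‖ ≤ 2 * ‖a‖ := by
    have h1 : ‖b‖ ≤ ‖a‖ + ‖a - b‖ := by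
      calc ‖b‖ = ‖a - (a - b)‖ := by congr 1; ring
        _ ≤ ‖a‖ + ‖a - b‖ := norm_sub_le _ _
    linarith
  have hmax : max ‖a‖ ‖b‖ ≤ 2 * ‖a‖ := max_le (by linarith) hble
  have hM0 : (0:ℝ) ≤ max ‖a‖ ‖b‖ := le_max_of_le_left hA
  have herr : (N:ℝ) ^ 2 * max ‖a‖ ‖b‖ ^ (N - 2) * ‖a - b‖ ≤ (N / 4) * ‖a‖ ^ (N - 1) := by
    have h1 : max ‖a‖ ‖b‖ ^ (N - 2) ≤ 2 ^ (N - 2) * ‖a‖ ^ (N - 2) := by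
      rw [← mul_pow]; exact pow_le_pow_left₀ hM0 hmax _
    calc (N:ℝ) ^ 2 * max ‖a‖ ‖b‖ ^ (N - 2) * ‖a - b‖
        ≤ (N:ℝ) ^ 2 * (2 ^ (N - 2) * ‖a‖ ^ (N - 2)) * (‖a‖ / (N * 2 ^ N)) := by
          gcongr
      _ = (N / 4) * ‖a‖ ^ (N - 1) := by
          show (N:ℝ) ^ 2 * (2 ^ M * ‖a‖ ^ M) * (‖a‖ / (N * 2 ^ (M + 2))) = (N / 4) * ‖a‖ ^ (M + 1)
          have hNne : (N:ℝ) ≠ 0 := by positivity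
          have h2ne : (2:ℝ) ^ M ≠ 0 := by positivity
          field_simp
          ring
  have hlow : (N:ℝ) * ‖a‖ ^ (N - 1) - (N:ℝ) ^ 2 * max ‖a‖ ‖b‖ ^ (N - 2) * ‖a - b‖ ≤ ‖S‖ := by
    have h3 := norm_sub_norm_le ((N:ℂ) * a ^ (N - 1)) ((N:ℂ) * a ^ (N - 1) - S)
    have h4 : ‖(N:ℂ) * a ^ (N - 1) - ((N:ℂ) * a ^ (N - 1) - S)‖ = ‖S‖ := by congr 1; ring
    have h5 : ‖(N:ℂ) * a ^ (N - 1) - S‖ = ‖S - (N:ℂ) * a ^ (N - 1)‖ := norm_sub_rev _ _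
    have h6 : ‖(N:ℂ) * a ^ (N - 1)‖ = N * ‖a‖ ^ (N - 1) := by
      rw [norm_mul, norm_pow]; simp
    have h7 := lem_sum N a b
    rw [h4, h5, h6] at h3
    linarith
  nlinarith [pow_nonneg hA (N - 1)]

lemma lem_case2 (N : ℕ) (hN : 2 ≤ N) (A B : ℝ) (hA : 0 ≤ A) (hB : 0 ≤ B) :
    A ^ (N - 2) * |A ^ 2 - B ^ 2| ≤ |A ^ N - B ^ N| := by
  obtain ⟨M, rfl⟩ : ∃ M, N = M + 2 := ⟨N - 2, by omega⟩
  show A ^ M * |A ^ 2 - B ^ 2| ≤ |A ^ (M + 2) - B ^ (M + 2)|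
  rcases le_total B A with hBA | hAB
  · rw [_root_.abs_of_nonneg (by nlinarith : (0:ℝ) ≤ A ^ 2 - B ^ 2),
        _root_.abs_of_nonneg (by nlinarith [pow_le_pow_left₀ hB hBA (M + 2)] :
          (0:ℝ) ≤ A ^ (M + 2) - B ^ (M + 2))]
    have e1 : A ^ (M + 2) = A ^ M * A ^ 2 := by ring
    have e2 : B ^ (M + 2) = B ^ M * B ^ 2 := by ring
    rw [e1, e2]
    nlinarith [pow_le_pow_left₀ hB hBA M, sq_nonneg B, pow_nonneg hB M]
  · rw [_root_.abs_of_nonpos (by nlinarith : A ^ 2 - B ^ 2 ≤ 0),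
        _root_.abs_of_nonpos (by nlinarith [pow_le_pow_left₀ hA hAB (M + 2)] :
          A ^ (M + 2) - B ^ (M + 2) ≤ 0)]
    have e1 : A ^ (M + 2) = A ^ M * A ^ 2 := by ring
    have e2 : B ^ (M + 2) = B ^ M * B ^ 2 := by ring
    rw [e1, e2]
    nlinarith [pow_le_pow_left₀ hA hAB M, sq_nonneg A, pow_nonneg hA M,
      mul_le_mul_of_nonneg_right (pow_le_pow_left₀ hA hAB M) (by nlinarith : (0:ℝ) ≤ B ^ 2 - A ^ 2)]

lemma lem_mu (d : ℝ) : ∃ μ : ℝ, 0 < μ ∧ ∀ j : ℤ, (j : ℝ) + d ≠ 0 → μ ≤ |(j : ℝ) + d| := by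
  rcases eq_or_ne (Int.fract d) 0 with hf | hf
  · refine ⟨1, one_pos, fun j hj => ?_⟩
    have hd : d = (⌊d⌋ : ℝ) := by
      have := Int.fract_add_floor d
      rw [hf] at this; linarith [Int.fract_add_floor d]
    rw [hd] at hj ⊢
    have : (j : ℝ) + (⌊d⌋ : ℝ) = ((j + ⌊d⌋ : ℤ) : ℝ) := by push_cast; ring
    rw [this] at hj ⊢
    have hne : j + ⌊d⌋ ≠ 0 := fun h => hj (by rw [h]; norm_num)
    calc (1:ℝ) = ((1:ℤ):ℝ) := by norm_num
      _ ≤ |((j + ⌊d⌋ : ℤ) : ℝ)| := by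
          rw [← Int.cast_abs]
          exact_mod_cast Int.one_le_abs hne
  · refine ⟨min (Int.fract d) (1 - Int.fract d), ?_, fun j _ => ?_⟩
    · have h0 : 0 ≤ Int.fract d := Int.fract_nonneg d
      have h1 : Int.fract d < 1 := Int.fract_lt_one d
      have : 0 < Int.fract d := lt_of_le_of_ne h0 (Ne.symm hf)
      exact lt_min this (by linarith)
    · have hdd : d = (⌊d⌋ : ℝ) + Int.fract d := by
        have := Int.fract_add_floor d; linarith
      have h0 : 0 ≤ Int.fract d := Int.fract_nonneg d
      have h1 : Int.fract d < 1 := Int.fract_lt_one d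
      obtain ⟨k, hk⟩ : ∃ k : ℤ, k = j + ⌊d⌋ := ⟨_, rfl⟩
      have hjd : (j : ℝ) + d = (k : ℝ) + Int.fract d := by
        conv_lhs => rw [hdd]
        rw [hk]
        push_cast
        ring
      rw [hjd]
      rcases le_or_gt 0 k with hk0 | hk0
      · have : (0:ℝ) ≤ (k:ℝ) := by exact_mod_cast hk0
        rw [_root_.abs_of_nonneg (by linarith)]
        have := min_le_left (Int.fract d) (1 - Int.fract d)
        linarith
      · have hk1 : (k : ℝ) ≤ -1 := by
          have h' : k ≤ -1 := by omega
          calc (k:ℝ) ≤ ((-1 : ℤ) : ℝ) := Int.cast_le.mpr h'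
            _ = -1 := by norm_num
        rw [_root_.abs_of_nonpos (by linarith)]
        have := min_le_right (Int.fract d) (1 - Int.fract d)
        linarith

set_option maxHeartbeats 1000000 in
lemma lem_arith (n t X P B R Im : ℝ) (hP : 0 ≤ P) (hn : 0 < n) (ht : 0 ≤ t) (hB : 0 < B)
    (hIm2 : t * (n * (P * X) - 3 * n ^ 2 * (B / 16 * P) * t) ≤ Im)
    (hmain : 2 * Im - n * t * (P * X) / 2 ≤ R)
    (hX : n * B * t + t + 1 ≤ X) : n * t * (P * X) ≤ R := by
  have hxq := mul_le_mul_of_nonneg_left hX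
    (mul_nonneg (mul_nonneg hn.le ht) hP)
  nlinarith [hxq, hIm2, hmain,
    mul_nonneg (mul_nonneg (mul_nonneg (mul_nonneg (sq_nonneg n) hB.le) ht) ht) hP,
    mul_nonneg (mul_nonneg (mul_nonneg hn.le ht) ht) hP,
    mul_nonneg (mul_nonneg hn.le ht) hP]

lemma lem_odd (N : ℕ) (hN : 2 ≤ N) (hodd : Odd N) (x u y : ℝ)
    (hs : |x + u| ≤ 1)
    (hX : N * 2 ^ N * |y| + N * 3 ^ (N - 1) + |y| + 1 ≤ |x|) :
    |x| ^ (N - 1) ≤ ‖((x:ℂ) + y * Complex.I) ^ N - ((u:ℂ) + y * Complex.I) ^ N‖ := by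
  set a : ℂ := (x:ℂ) + y * Complex.I with ha
  set b : ℂ := (u:ℂ) + y * Complex.I with hb
  set s : ℝ := x + u with hsdef
  have hNpos : (0:ℝ) < N := by positivity
  have hy0 : (0:ℝ) ≤ |y| := abs_nonneg y
  have h3pos : (0:ℝ) < (3:ℝ) ^ (N-1) := by positivity
  have h2pos : (0:ℝ) < (2:ℝ) ^ N := by positivity
  have hq1 : (0:ℝ) ≤ N * 2 ^ N * |y| := by positivity
  have hq2 : (0:ℝ) ≤ N * 3 ^ (N - 1) := by positivity
  have hX1 : (1:ℝ) ≤ |x| := by linarith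
  have hXy : |y| ≤ |x| := by linarith
  have hX0 : (0:ℝ) < |x| := by linarith
  -- basic facts about a
  have hare : a.re = x := by simp [ha]
  have haim : a.im = y := by simp [ha]
  have haX : |x| ≤ ‖a‖ := by
    calc |x| = |a.re| := by rw [hare]
      _ ≤ ‖a‖ := abs_re_le_norm a
  have haU : ‖a‖ ≤ 2 * |x| := by
    calc ‖a‖ ≤ ‖(x:ℂ)‖ + ‖(y:ℂ) * Complex.I‖ := norm_add_le _ _
      _ = |x| + |y| := by simp
      _ ≤ 2 * |x| := by linarith
  have hconj : b = -((starRingEnd ℂ) a) + (s:ℂ) := by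
    rw [ha, hb, hsdef]
    simp [Complex.ext_iff]
  have hnconj : ‖-((starRingEnd ℂ) a)‖ = ‖a‖ := by simp
  have hbnear : ‖b - (-((starRingEnd ℂ) a))‖ = |s| := by
    rw [hconj]; simp
  -- Lipschitz bound for b vs -conj a
  have hbnorm : ‖b‖ ≤ 2 * |x| + 1 := by
    calc ‖b‖ ≤ ‖-((starRingEnd ℂ) a)‖ + ‖b - (-((starRingEnd ℂ) a))‖ := by
          have := norm_add_le (-((starRingEnd ℂ) a)) (b - (-((starRingEnd ℂ) a)))
          simpa using this
      _ = ‖a‖ + |s| := by rw [hnconj, hbnear]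
      _ ≤ 2 * |x| + 1 := by linarith
  have hlip : ‖b ^ N - (-((starRingEnd ℂ) a)) ^ N‖ ≤ N * (3 * |x|) ^ (N - 1) * 1 := by
    calc ‖b ^ N - (-((starRingEnd ℂ) a)) ^ N‖
        ≤ N * max ‖b‖ ‖-((starRingEnd ℂ) a)‖ ^ (N - 1) * ‖b - (-((starRingEnd ℂ) a))‖ :=
          lem_lip N b _
      _ ≤ N * (3 * |x|) ^ (N - 1) * 1 := by
          rw [hbnear]
          have hmaxb : max ‖b‖ ‖-((starRingEnd ℂ) a)‖ ≤ 3 * |x| := by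
            rw [hnconj]; exact max_le (by linarith) (by linarith)
          have hmb0 : (0:ℝ) ≤ max ‖b‖ ‖-((starRingEnd ℂ) a)‖ := le_max_of_le_left (norm_nonneg b)
          exact mul_le_mul (mul_le_mul le_rfl (pow_le_pow_left₀ hmb0 hmaxb _)
            (by positivity) hNpos.le) hs (abs_nonneg s) (by positivity)
  -- (-conj a)^N = -conj(a^N)
  have hpow : (-((starRingEnd ℂ) a)) ^ N = -((starRingEnd ℂ) (a ^ N)) := by
    rw [hodd.neg_pow, map_pow]
  -- real part estimate
  have hrepow : |x| ^ N - N * (2 * |x|) ^ (N - 1) * |y| ≤ |(a ^ N).re| := by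
    have h1 : ‖a ^ N - ((x:ℂ)) ^ N‖ ≤ N * (2 * |x|) ^ (N - 1) * |y| := by
      calc ‖a ^ N - ((x:ℂ)) ^ N‖ ≤ N * max ‖a‖ ‖(x:ℂ)‖ ^ (N - 1) * ‖a - (x:ℂ)‖ :=
            lem_lip N a _
        _ ≤ N * (2 * |x|) ^ (N - 1) * |y| := by
            have e1 : ‖a - (x:ℂ)‖ = |y| := by rw [ha]; simp
            rw [e1]
            have hmax2 : max ‖a‖ ‖(x:ℂ)‖ ≤ 2 * |x| := by
              refine max_le haU ?_
              have ex : ‖(x:ℂ)‖ = |x| := by simp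
              rw [ex]
              linarith
            exact mul_le_mul_of_nonneg_right (mul_le_mul_of_nonneg_left
              (pow_le_pow_left₀ (le_max_of_le_left (norm_nonneg a)) hmax2 _) hNpos.le) hy0
    have h2 : |(a ^ N).re - x ^ N| ≤ N * (2 * |x|) ^ (N - 1) * |y| := by
      have : (a ^ N).re - x ^ N = (a ^ N - ((x:ℂ)) ^ N).re := by
        simp [Complex.sub_re]
        norm_cast
      rw [this]
      exact (abs_re_le_norm _).trans h1
    have h3 : |x ^ N| = |x| ^ N := abs_pow x N
    have h4 : |x ^ N| - |(a ^ N).re - x ^ N| ≤ |(a ^ N).re| := by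
      have := abs_sub_abs_le_abs_sub (x ^ N : ℝ) (x ^ N - (a ^ N).re)
      simp at this
      calc |x ^ N| - |(a ^ N).re - x ^ N| = |x ^ N| - |x ^ N - (a ^ N).re| := by rw [abs_sub_comm]
        _ ≤ |x ^ N - (x ^ N - (a ^ N).re)| := abs_sub_abs_le_abs_sub _ _
        _ = |(a ^ N).re| := by congr 1; ring
    linarith
  -- main chain
  have hmain : 2 * |(a ^ N).re| - N * (3 * |x|) ^ (N - 1) * 1 ≤ ‖a ^ N - b ^ N‖ := by
    have h1 : a ^ N - b ^ N = (a ^ N + (starRingEnd ℂ) (a ^ N)) - (b ^ N - (-((starRingEnd ℂ) a)) ^ N) := by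
      rw [hpow]; ring
    have h2 : ‖a ^ N + (starRingEnd ℂ) (a ^ N)‖ = 2 * |(a ^ N).re| := by
      rw [Complex.add_conj]
      simp [abs_mul]
    calc 2 * |(a ^ N).re| - N * (3 * |x|) ^ (N - 1) * 1
        ≤ ‖a ^ N + (starRingEnd ℂ) (a ^ N)‖ - ‖b ^ N - (-((starRingEnd ℂ) a)) ^ N‖ := by
          rw [h2]; linarith
      _ ≤ ‖(a ^ N + (starRingEnd ℂ) (a ^ N)) - (b ^ N - (-((starRingEnd ℂ) a)) ^ N)‖ :=
          norm_sub_norm_le _ _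
      _ = ‖a ^ N - b ^ N‖ := by rw [← h1]
  -- final arithmetic
  have e2 : (2 * |x|) ^ (N - 1) = 2 ^ (N - 1) * |x| ^ (N - 1) := mul_pow _ _ _
  have e3 : (3 * |x|) ^ (N - 1) = 3 ^ (N - 1) * |x| ^ (N - 1) := mul_pow _ _ _
  have e4 : |x| ^ N = |x| ^ (N - 1) * |x| := by
    rw [← pow_succ]; congr 1; omega
  have e5 : (2:ℝ) ^ (N - 1) = 2 ^ N / 2 := by
    rw [eq_div_iff (two_ne_zero), ← pow_succ]; congr 1; omega
  have hP : (0:ℝ) ≤ |x| ^ (N - 1) := by positivity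
  rw [e2, e4, e5] at hrepow
  rw [e3] at hmain
  have hpx : |x| ^ (N - 1) * (N * 2 ^ N * |y| + N * 3 ^ (N - 1) + |y| + 1) ≤ |x| ^ (N - 1) * |x| :=
    mul_le_mul_of_nonneg_left hX hP
  have hp1 : (0:ℝ) ≤ (N:ℝ) * 2 ^ N * |y| * |x| ^ (N - 1) := by positivity
  have hp2 : (0:ℝ) ≤ (N:ℝ) * 3 ^ (N - 1) * |x| ^ (N - 1) := by positivity
  have hp3 : (0:ℝ) ≤ |y| * |x| ^ (N - 1) := by positivity
  nlinarith [hpx, hp1, hp2, hp3, hrepow, hmain]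

lemma lem_even (N : ℕ) (hN : 2 ≤ N) (heven : Even N) (x u y : ℝ)
    (hs : |x + u| ≤ |y| / (2 * 3 ^ (N - 1)))
    (hX : N * 2 ^ (N + 2) * |y| + |y| + 1 ≤ |x|) :
    N * |y| * |x| ^ (N - 1) ≤ ‖((x:ℂ) + y * Complex.I) ^ N - ((u:ℂ) + y * Complex.I) ^ N‖ := by
  set a : ℂ := (x:ℂ) + y * Complex.I with ha
  set b : ℂ := (u:ℂ) + y * Complex.I with hb
  set s : ℝ := x + u with hsdef
  have hNpos : (0:ℝ) < N := by positivity
  have hy0 : (0:ℝ) ≤ |y| := abs_nonneg y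
  have h3pos : (0:ℝ) < (3:ℝ) ^ (N - 1) := by positivity
  have h2pos : (0:ℝ) < (2:ℝ) ^ (N + 2) := by positivity
  have hq1 : (0:ℝ) ≤ N * 2 ^ (N + 2) * |y| := by positivity
  have hX1 : (1:ℝ) ≤ |x| := by linarith
  have hXy : |y| ≤ |x| := by linarith
  have hX0 : (0:ℝ) < |x| := by linarith
  have hsy : |s| ≤ |y| := by
    calc |s| ≤ |y| / (2 * 3 ^ (N - 1)) := hs
      _ ≤ |y| / 1 := by
          have h31 : (1:ℝ) ≤ 3 ^ (N - 1) := by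
            simpa using pow_le_pow_left₀ (by norm_num) (by norm_num : (1:ℝ) ≤ 3) (N - 1)
          gcongr
          linarith
      _ = |y| := div_one _
  -- basic facts about a
  have haX : |x| ≤ ‖a‖ := by
    have : a.re = x := by simp [ha]
    calc |x| = |a.re| := by rw [this]
      _ ≤ ‖a‖ := abs_re_le_norm a
  have haU : ‖a‖ ≤ 2 * |x| := by
    calc ‖a‖ ≤ ‖(x:ℂ)‖ + ‖(y:ℂ) * Complex.I‖ := norm_add_le _ _
      _ = |x| + |y| := by simp
      _ ≤ 2 * |x| := by linarith
  have hconj : b = -((starRingEnd ℂ) a) + (s:ℂ) := by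
    rw [ha, hb, hsdef]
    simp [Complex.ext_iff]
  have hnconj : ‖-((starRingEnd ℂ) a)‖ = ‖a‖ := by simp
  have hbnear : ‖b - (-((starRingEnd ℂ) a))‖ = |s| := by rw [hconj]; simp
  have hbnorm : ‖b‖ ≤ 3 * |x| := by
    calc ‖b‖ ≤ ‖-((starRingEnd ℂ) a)‖ + ‖b - (-((starRingEnd ℂ) a))‖ := by
          have := norm_add_le (-((starRingEnd ℂ) a)) (b - (-((starRingEnd ℂ) a)))
          simpa using this
      _ = ‖a‖ + |s| := by rw [hnconj, hbnear]
      _ ≤ 3 * |x| := by linarith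
  -- Lipschitz bound
  have hlip : ‖b ^ N - (-((starRingEnd ℂ) a)) ^ N‖
      ≤ N * (3 ^ (N - 1) * |x| ^ (N - 1)) * (|y| / (2 * 3 ^ (N - 1))) := by
    calc ‖b ^ N - (-((starRingEnd ℂ) a)) ^ N‖
        ≤ N * max ‖b‖ ‖-((starRingEnd ℂ) a)‖ ^ (N - 1) * ‖b - (-((starRingEnd ℂ) a))‖ :=
          lem_lip N b _
      _ ≤ N * (3 ^ (N - 1) * |x| ^ (N - 1)) * (|y| / (2 * 3 ^ (N - 1))) := by
          rw [hbnear, ← mul_pow]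
          have hmaxb : max ‖b‖ ‖-((starRingEnd ℂ) a)‖ ≤ 3 * |x| := by
            rw [hnconj]; exact max_le hbnorm (by linarith)
          have hmb0 : (0:ℝ) ≤ max ‖b‖ ‖-((starRingEnd ℂ) a)‖ := le_max_of_le_left (norm_nonneg b)
          exact mul_le_mul (mul_le_mul le_rfl (pow_le_pow_left₀ hmb0 hmaxb _)
            (by positivity) hNpos.le) hs (abs_nonneg s) (by positivity)
  have hlip2 : ‖b ^ N - (-((starRingEnd ℂ) a)) ^ N‖ ≤ N * |y| * |x| ^ (N - 1) / 2 := by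
    refine hlip.trans (le_of_eq ?_)
    field_simp
  have hpow : (-((starRingEnd ℂ) a)) ^ N = (starRingEnd ℂ) (a ^ N) := by
    rw [heven.neg_pow, map_pow]
  -- imaginary part of a^N
  set S : ℂ := ∑ i ∈ range N, ((x:ℂ)) ^ i * a ^ (N - 1 - i) with hS
  have hax : a - (x:ℂ) = (y:ℂ) * Complex.I := by rw [ha]; ring
  have hfac : a ^ N = ((x:ℂ)) ^ N + S * ((y:ℂ) * Complex.I) := by
    have h' := geom_sum₂_mul ((x:ℂ)) a N
    rw [hS, ← hax]
    linear_combination h'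
  have hIm : (a ^ N).im = y * S.re := by
    rw [hfac]
    simp [Complex.add_im, Complex.mul_im, ← Complex.ofReal_pow]
    ring
  -- estimate S.re
  have hmaxax : max ‖a‖ ‖((x:ℂ))‖ = ‖a‖ := max_eq_left (by simpa using haX)
  have hSre : (N:ℝ) * |x| ^ (N - 1) - 3 * N ^ 2 * ‖a‖ ^ (N - 2) * |y| ≤ |S.re| := by
    have h1 := lem_sum N a ((x:ℂ))
    rw [hmaxax, hax] at h1
    have h1' : ‖S - (N:ℂ) * a ^ (N - 1)‖ ≤ N ^ 2 * ‖a‖ ^ (N - 2) * |y| := by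
      calc ‖S - (N:ℂ) * a ^ (N - 1)‖ ≤ N ^ 2 * ‖a‖ ^ (N - 2) * ‖(y:ℂ) * Complex.I‖ := h1
        _ = N ^ 2 * ‖a‖ ^ (N - 2) * |y| := by simp
    have h2 := lem_lip (N - 1) a ((x:ℂ))
    rw [hmaxax, hax] at h2
    have h2' : ‖a ^ (N - 1) - ((x:ℂ)) ^ (N - 1)‖ ≤ N * ‖a‖ ^ (N - 2) * |y| := by
      calc ‖a ^ (N - 1) - ((x:ℂ)) ^ (N - 1)‖
          ≤ (N - 1 : ℕ) * ‖a‖ ^ (N - 1 - 1) * ‖(y:ℂ) * Complex.I‖ := h2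
        _ ≤ N * ‖a‖ ^ (N - 2) * |y| := by
            rw [show N - 1 - 1 = N - 2 by omega]
            simp only [norm_mul, Complex.norm_I, mul_one, Complex.norm_real,
              Real.norm_eq_abs]
            gcongr
            exact_mod_cast Nat.cast_le.mpr (by omega : N - 1 ≤ N)
    have h3 : ‖S - (N:ℂ) * ((x:ℂ)) ^ (N - 1)‖ ≤ 3 * N ^ 2 * ‖a‖ ^ (N - 2) * |y| := by
      calc ‖S - (N:ℂ) * ((x:ℂ)) ^ (N - 1)‖
          ≤ ‖S - (N:ℂ) * a ^ (N - 1)‖ + ‖(N:ℂ) * a ^ (N - 1) - (N:ℂ) * ((x:ℂ)) ^ (N - 1)‖ := by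
            have := norm_add_le (S - (N:ℂ) * a ^ (N - 1))
              ((N:ℂ) * a ^ (N - 1) - (N:ℂ) * ((x:ℂ)) ^ (N - 1))
            simpa using this
        _ ≤ N ^ 2 * ‖a‖ ^ (N - 2) * |y| + N * (N * ‖a‖ ^ (N - 2) * |y|) := by
            refine add_le_add h1' ?_
            rw [show (N:ℂ) * a ^ (N - 1) - (N:ℂ) * ((x:ℂ)) ^ (N - 1)
                = (N:ℂ) * (a ^ (N - 1) - ((x:ℂ)) ^ (N - 1)) by ring, norm_mul]
            have : ‖(N:ℂ)‖ = (N:ℝ) := by simp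
            rw [this]
            exact mul_le_mul_of_nonneg_left h2' hNpos.le
        _ ≤ 3 * N ^ 2 * ‖a‖ ^ (N - 2) * |y| := by
            nlinarith [mul_nonneg (mul_nonneg (mul_nonneg hNpos.le hNpos.le)
              (pow_nonneg (norm_nonneg a) (N - 2))) hy0]
    have h4 : |S.re - N * x ^ (N - 1)| ≤ 3 * N ^ 2 * ‖a‖ ^ (N - 2) * |y| := by
      have e0 : (N:ℂ) * ((x:ℂ)) ^ (N - 1) = (((N:ℝ) * x ^ (N - 1) : ℝ) : ℂ) := by
        push_cast; ring
      have e : S.re - N * x ^ (N - 1) = (S - (N:ℂ) * ((x:ℂ)) ^ (N - 1)).re := by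
        rw [e0, Complex.sub_re, Complex.ofReal_re]
      rw [e]
      exact (abs_re_le_norm _).trans h3
    have h5 : |(N:ℝ) * x ^ (N - 1)| = N * |x| ^ (N - 1) := by
      rw [_root_.abs_mul, _root_.abs_pow, Nat.abs_cast]
    have h6 : |(N:ℝ) * x ^ (N - 1)| - |S.re - N * x ^ (N - 1)| ≤ |S.re| := by
      calc |(N:ℝ) * x ^ (N - 1)| - |S.re - N * x ^ (N - 1)|
          = |(N:ℝ) * x ^ (N - 1)| - |(N:ℝ) * x ^ (N - 1) - S.re| := by rw [abs_sub_comm]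
        _ ≤ |(N:ℝ) * x ^ (N - 1) - ((N:ℝ) * x ^ (N - 1) - S.re)| := abs_sub_abs_le_abs_sub _ _
        _ = |S.re| := by congr 1; ring
    -- need 2*N^2 ≥ 3*N^2?? fix: use 3*N^2 in statement
    rw [h5] at h6
    linarith [h4, h6]
  -- lower bound on |Im(a^N)|
  have hA2 : ‖a‖ ^ (N - 2) ≤ 2 ^ (N - 2) * |x| ^ (N - 2) := by
    rw [← mul_pow]; exact pow_le_pow_left₀ (norm_nonneg a) haU _
  have hIm2 : |y| * ((N:ℝ) * |x| ^ (N - 1) - 3 * N ^ 2 * (2 ^ (N - 2) * |x| ^ (N - 2)) * |y|)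
      ≤ |(a ^ N).im| := by
    have step : (N:ℝ) * |x| ^ (N - 1) - 3 * N ^ 2 * (2 ^ (N - 2) * |x| ^ (N - 2)) * |y|
        ≤ |S.re| := by
      refine le_trans ?_ hSre
      have hm := mul_le_mul_of_nonneg_left (mul_le_mul_of_nonneg_right hA2 hy0)
        (by positivity : (0:ℝ) ≤ 3 * (N:ℝ) ^ 2)
      linarith only [hm]
    calc |y| * ((N:ℝ) * |x| ^ (N - 1) - 3 * N ^ 2 * (2 ^ (N - 2) * |x| ^ (N - 2)) * |y|)
        ≤ |y| * |S.re| := mul_le_mul_of_nonneg_left step hy0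
      _ = |y * S.re| := (_root_.abs_mul y S.re).symm
      _ = |(a ^ N).im| := by rw [hIm]
  -- assemble
  have hmain : 2 * |(a ^ N).im| - N * |y| * |x| ^ (N - 1) / 2 ≤ ‖a ^ N - b ^ N‖ := by
    have h1 : a ^ N - b ^ N
        = (a ^ N - (starRingEnd ℂ) (a ^ N)) - (b ^ N - (-((starRingEnd ℂ) a)) ^ N) := by
      rw [hpow]; ring
    have h2 : ‖a ^ N - (starRingEnd ℂ) (a ^ N)‖ = 2 * |(a ^ N).im| := by
      rw [Complex.sub_conj]
      rw [norm_mul, Complex.norm_I, mul_one, Complex.norm_real, Real.norm_eq_abs,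
        _root_.abs_mul]
      norm_num
    calc 2 * |(a ^ N).im| - N * |y| * |x| ^ (N - 1) / 2
        ≤ ‖a ^ N - (starRingEnd ℂ) (a ^ N)‖ - ‖b ^ N - (-((starRingEnd ℂ) a)) ^ N‖ := by
          rw [h2]; linarith
      _ ≤ ‖(a ^ N - (starRingEnd ℂ) (a ^ N)) - (b ^ N - (-((starRingEnd ℂ) a)) ^ N)‖ :=
          norm_sub_norm_le _ _
      _ = ‖a ^ N - b ^ N‖ := by rw [← h1]
  -- final arithmetic
  have e4 : |x| ^ (N - 1) = |x| ^ (N - 2) * |x| := by rw [← pow_succ]; congr 1; omega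
  have e6 : (2:ℝ) ^ (N - 2) = 2 ^ (N + 2) / 16 := by
    rw [eq_div_iff (by norm_num : (16:ℝ) ≠ 0), show (16:ℝ) = 2 ^ 4 by norm_num, ← pow_add]
    congr 1; omega
  rw [e4] at hIm2 hmain ⊢
  rw [e6] at hIm2
  exact lem_arith (N:ℝ) |y| |x| (|x| ^ (N - 2)) (2 ^ (N + 2)) _ _
    (by positivity) hNpos hy0 (by positivity) hIm2 hmain hX
theorem stmt_17 (τ : ℝ) (hτ : 0 < τ) (C : ℂ) (N : ℕ) (hN : 2 ≤ N)
    (γ : ℤ → ℂ) (hγ : ∀ n : ℤ, γ n = ((n : ℂ) / τ + C) ^ N) :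
    ∃ K : ℝ, 0 < K ∧ ∃ n₀ : ℕ, ∀ n : ℤ, n₀ ≤ n.natAbs →
      ∀ m : ℤ, γ m ≠ γ n → K * (n.natAbs : ℝ) ^ (N - 1) ≤ ‖γ n - γ m‖ := by
  set y := C.im with hy
  set cr := C.re with hcr
  set x : ℤ → ℝ := fun k => k / τ + cr with hx
  set a : ℤ → ℂ := fun k => ((x k : ℝ) : ℂ) + (y : ℝ) * Complex.I with ha
  have hNR : (0:ℝ) < N := by
    have : 0 < N := by omega
    exact_mod_cast this
  have hγ' : ∀ k : ℤ, γ k = (a k) ^ N := by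
    intro k
    rw [hγ k]
    congr 1
    have e1 : ((k:ℂ)) / (τ:ℂ) = (((k : ℝ) / τ : ℝ) : ℂ) := by push_cast; ring
    rw [ha, hx, e1]
    apply Complex.ext <;> simp [hy, hcr]
  -- case-3 handler
  obtain ⟨δ, c₃, T₃, hδ, hc₃, hT₃, h3⟩ :
      ∃ δ c₃ T₃ : ℝ, 0 < δ ∧ 0 < c₃ ∧ 0 ≤ T₃ ∧
        ∀ n m : ℤ, γ m ≠ γ n → T₃ ≤ |x n| → |x n + x m| < δ →
          c₃ * |x n| ^ (N - 1) ≤ ‖γ n - γ m‖ := by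
    rcases Nat.even_or_odd N with heven | hodd
    · by_cases hy0 : y = 0
      · obtain ⟨μ, hμ, hmu⟩ := lem_mu (2 * cr * τ)
        refine ⟨μ / τ, 1, 0, by positivity, one_pos, le_refl 0, ?_⟩
        intro n m hne _ hlt
        exfalso
        have hsum : x n + x m = (((n + m : ℤ) : ℝ) + 2 * cr * τ) / τ := by
          rw [hx]
          push_cast
          field_simp
          ring
        have hne0 : ((n + m : ℤ) : ℝ) + 2 * cr * τ ≠ 0 := by
          intro h0
          have hx0 : x n + x m = 0 := by rw [hsum, h0, zero_div]
          have hxm : x m = -(x n) := by linarith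
          apply hne
          rw [hγ' m, hγ' n, ha]
          simp only [hy0, hxm]
          push_cast
          rw [show (-(x n : ℝ) : ℂ) = -((x n : ℝ) : ℂ) by push_cast; ring]
          simp only [Complex.ofReal_zero, zero_mul, add_zero]
          exact heven.neg_pow _
        have hmu' := hmu (n + m) hne0
        rw [hsum] at hlt
        rw [abs_div, abs_of_pos hτ] at hlt
        have : μ / τ ≤ |((n + m : ℤ) : ℝ) + 2 * cr * τ| / τ := by gcongr
        linarith
      · have hyabs : 0 < |y| := abs_pos.mpr hy0
        refine ⟨|y| / (2 * 3 ^ (N - 1)), N * |y|, N * 2 ^ (N + 2) * |y| + |y| + 1,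
          by positivity, by positivity, by positivity, ?_⟩
        intro n m hne hT hlt
        rw [hγ' n, hγ' m, ha]
        simpa using lem_even N hN heven (x n) (x m) y hlt.le hT
    · refine ⟨1, 1, N * 2 ^ N * |y| + N * 3 ^ (N - 1) + |y| + 1,
        one_pos, one_pos, by positivity, ?_⟩
      intro n m hne hT hlt
      rw [hγ' n, hγ' m, ha]
      simpa using lem_odd N hN hodd (x n) (x m) y hlt.le hT
  -- constants
  set T : ℝ := max T₃ 1 with hTdef
  set c : ℝ := min (1 / τ) (min (δ / (N * 2 ^ N)) c₃) with hcdef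
  have hcpos : 0 < c := by
    refine lt_min (by positivity) (lt_min (by positivity) hc₃)
  refine ⟨c * (1 / (2 * τ)) ^ (N - 1), by positivity, ⌈2 * τ * (T + |cr| + 1)⌉₊ + 1, ?_⟩
  intro n hn m hne
  -- size facts
  have hν : ((n.natAbs : ℝ)) = |(n : ℝ)| := by
    exact_mod_cast Nat.cast_natAbs (α := ℝ) n
  have hν1 : 2 * τ * (T + |cr| + 1) ≤ |(n : ℝ)| := by
    have h1 : (2 * τ * (T + |cr| + 1)) ≤ (⌈2 * τ * (T + |cr| + 1)⌉₊ : ℝ) := Nat.le_ceil _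
    have h2 : ((⌈2 * τ * (T + |cr| + 1)⌉₊ + 1 : ℕ) : ℝ) ≤ (n.natAbs : ℝ) := by
      exact_mod_cast hn
    rw [hν] at h2
    push_cast at h2
    linarith
  have hν2 : T + |cr| + 1 ≤ |(n : ℝ)| / (2 * τ) := by
    rw [le_div_iff₀ (by positivity)]
    linarith [hν1]
  have hxlow : |(n : ℝ)| / τ - |cr| ≤ |x n| := by
    have h1 : |(n : ℝ) / τ| ≤ |x n| + |cr| := by
      calc |(n : ℝ) / τ| = |(x n) + (-cr)| := by rw [hx]; congr 1; ring
        _ ≤ |x n| + |(-cr)| := abs_add_le _ _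
        _ = |x n| + |cr| := by rw [abs_neg]
    rw [abs_div, abs_of_pos hτ] at h1
    linarith
  have hντ : |(n : ℝ)| / τ = |(n : ℝ)| / (2 * τ) + |(n : ℝ)| / (2 * τ) := by ring
  have hT01 : (1:ℝ) ≤ T := le_max_right _ _
  have hX2a : |(n : ℝ)| / (2 * τ) ≤ |x n| := by
    rw [hντ] at hxlow; linarith
  have hX2b : T ≤ |x n| := by
    have hA0 : (0:ℝ) ≤ |(n : ℝ)| / (2 * τ) := by positivity
    rw [hντ] at hxlow; linarith
  have hT1 : (1:ℝ) ≤ |x n| := le_trans (le_max_right _ _) hX2b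
  -- conversion to |x n| powers
  have hconv : c * (1 / (2 * τ)) ^ (N - 1) * (n.natAbs : ℝ) ^ (N - 1)
      ≤ c * |x n| ^ (N - 1) := by
    rw [hν, mul_assoc, ← mul_pow]
    refine mul_le_mul_of_nonneg_left (pow_le_pow_left₀ (by positivity) ?_ _) hcpos.le
    calc 1 / (2 * τ) * |(n : ℝ)| = |(n : ℝ)| / (2 * τ) := by ring
      _ ≤ |x n| := hX2a
  refine le_trans hconv ?_
  -- now the three cases over m
  have hsub : a n - a m = ((x n - x m : ℝ) : ℂ) := by
    rw [ha]; push_cast; ring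
  have hnormsub : ‖a n - a m‖ = |x n - x m| := by
    rw [hsub, Complex.norm_real, Real.norm_eq_abs]
  have hnm : n ≠ m := fun h => hne (by rw [h])
  have hr1 : 1 / τ ≤ |x n - x m| := by
    have e : x n - x m = ((n - m : ℤ) : ℝ) / τ := by
      rw [hx]; push_cast; ring
    rw [e, abs_div, abs_of_pos hτ]
    gcongr
    have : (1 : ℤ) ≤ |n - m| := Int.one_le_abs (sub_ne_zero.mpr hnm)
    calc (1:ℝ) = ((1:ℤ):ℝ) := by norm_num
      _ ≤ ((|n - m| : ℤ) : ℝ) := by exact_mod_cast this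
      _ = |((n - m : ℤ) : ℝ)| := by rw [Int.cast_abs]
  have hxA : |x n| ≤ ‖a n‖ := by
    have : (a n).re = x n := by rw [ha]; simp
    calc |x n| = |(a n).re| := by rw [this]
      _ ≤ ‖a n‖ := Complex.abs_re_le_norm _
  have hPnn : (0:ℝ) ≤ |x n| ^ (N - 1) := by positivity
  by_cases hclose : |x n - x m| * (N * 2 ^ N) ≤ ‖a n‖
  · -- case 1 : m close to n
    have hkey := lem_case1 N hN (a n) (a m) (by rwa [hnormsub])
    have hc1 : c ≤ 1 / τ := min_le_left _ _
    calc c * |x n| ^ (N - 1) ≤ (1 / τ) * |x n| ^ (N - 1) :=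
          mul_le_mul_of_nonneg_right hc1 hPnn
      _ ≤ |x n - x m| * ‖a n‖ ^ (N - 1) := by
          refine mul_le_mul hr1 (pow_le_pow_left₀ (abs_nonneg _) hxA _) hPnn (abs_nonneg _)
      _ = ‖a n‖ ^ (N - 1) * ‖a n - a m‖ := by rw [hnormsub]; ring
      _ ≤ ‖(a n) ^ N - (a m) ^ N‖ := hkey
      _ = ‖γ n - γ m‖ := by rw [hγ' n, hγ' m]
  · by_cases hfar : δ ≤ |x n + x m|
    · -- case 2 : moduli differ
      have hA2 : ‖a n‖ ^ 2 = (x n) ^ 2 + y ^ 2 := by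
        rw [ha, Complex.sq_norm, Complex.normSq_add_mul_I]
      have hB2 : ‖a m‖ ^ 2 = (x m) ^ 2 + y ^ 2 := by
        rw [ha, Complex.sq_norm, Complex.normSq_add_mul_I]
      have habs2 : |‖a n‖ ^ 2 - ‖a m‖ ^ 2| = |x n - x m| * |x n + x m| := by
        rw [hA2, hB2, show (x n) ^ 2 + y ^ 2 - ((x m) ^ 2 + y ^ 2)
          = (x n - x m) * (x n + x m) by ring, _root_.abs_mul]
      have hkey := lem_case2 N hN ‖a n‖ ‖a m‖ (norm_nonneg _) (norm_nonneg _)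
      rw [habs2] at hkey
      have hup : |‖a n‖ ^ N - ‖a m‖ ^ N| ≤ ‖γ n - γ m‖ := by
        rw [hγ' n, hγ' m, ← norm_pow, ← norm_pow]
        exact abs_norm_sub_norm_le _ _
      have hr2 : |x n| / (N * 2 ^ N) ≤ |x n - x m| := by
        have h' := not_le.mp hclose
        rw [div_le_iff₀ (by positivity)]
        linarith [hxA]
      have estep : |x n| ^ (N - 1) = |x n| ^ (N - 2) * |x n| := by
        rw [← pow_succ]; congr 1; omega
      have hc2 : c ≤ δ / (N * 2 ^ N) := le_trans (min_le_right _ _) (min_le_left _ _)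
      calc c * |x n| ^ (N - 1) ≤ (δ / (N * 2 ^ N)) * |x n| ^ (N - 1) :=
            mul_le_mul_of_nonneg_right hc2 hPnn
        _ = |x n| ^ (N - 2) * ((|x n| / (N * 2 ^ N)) * δ) := by rw [estep]; ring
        _ ≤ ‖a n‖ ^ (N - 2) * (|x n - x m| * |x n + x m|) := by
            refine mul_le_mul (pow_le_pow_left₀ (abs_nonneg _) hxA _)
              (mul_le_mul hr2 hfar hδ.le (abs_nonneg _)) (by positivity) (by positivity)
        _ ≤ |‖a n‖ ^ N - ‖a m‖ ^ N| := hkey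
        _ ≤ ‖γ n - γ m‖ := hup
    · -- case 3
      have hT3 : T₃ ≤ |x n| := le_trans (le_trans (le_max_left _ _) le_rfl) hX2b
      have hc3 : c ≤ c₃ := le_trans (min_le_right _ _) (min_le_right _ _)
      calc c * |x n| ^ (N - 1) ≤ c₃ * |x n| ^ (N - 1) :=
            mul_le_mul_of_nonneg_right hc3 hPnn
        _ ≤ ‖γ n - γ m‖ := h3 n m hne hT3 (not_le.mp hfar)
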